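/- Let M be a compact smooth manifold without boundary, f : M → M a C¹ diffeomorphism, and p a hyperbolic fixed point of f. Let y ∈ W^u(p) = {z ∈ M : d(f^{−n}(z), p) → 0 as n → ∞} and y' ∈ W^s(p) = {z ∈ M : d(f^n(z), p) → 0 as n → ∞}. Then for all neighborhoods V_y of y and V_{y'} of y' there exists an integer l such that for every n ≥ l there is a point z ∈ V_{y'} with f^n(z) ∈ V_y. -/

import Mathlib

open Manifold Filter Topology Function
open scoped TensorProduct

noncomputable section

/-- The model space `ℝ^d`. -/
abbrev Euc (d : ℕ) := EuclideanSpace ℝ (Fin d)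

variable (d : ℕ) {M : Type*} [MetricSpace M] [CompactSpace M]
  [ChartedSpace (Euc d) M] [IsManifold (𝓡 d) ((⊤ : ℕ∞) : WithTop ℕ∞) M]

/-- The derivative of `f` at `x`, viewed as a linear endomorphism of the model space `ℝ^d`
(the tangent spaces are identified with `ℝ^d`). -/
def Dop (f : M → M) (x : M) : Euc d →L[ℝ] Euc d := mfderiv (𝓡 d) (𝓡 d) f x

/-- The operator norm `‖A|V‖` of the restriction of `A` to the subspace `V`. -/
def normOn (A : Euc d →L[ℝ] Euc d) (V : Submodule ℝ (Euc d)) : ℝ := ‖A.comp V.subtypeL‖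

/-- A `C¹` diffeomorphism of `M`. -/
structure C1Diffeo (d : ℕ) (M : Type*) [MetricSpace M]
    [ChartedSpace (Euc d) M] where
  toFun : M → M
  invFun : M → M
  left_inv : Function.LeftInverse invFun toFun
  right_inv : Function.RightInverse invFun toFun
  contMDiff_toFun : ContMDiff (𝓡 d) (𝓡 d) 1 toFun
  contMDiff_invFun : ContMDiff (𝓡 d) (𝓡 d) 1 invFun

instance : CoeFun (C1Diffeo d M) (fun _ => M → M) := ⟨C1Diffeo.toFun⟩

/-- The `C¹` distance on `Diff¹(M)`. -/
def c1Dist (f g : C1Diffeo d M) : ℝ :=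
  (⨆ x : M, dist (f.toFun x) (g.toFun x)) + (⨆ x : M, ‖Dop d f.toFun x - Dop d g.toFun x‖)
  + (⨆ x : M, dist (f.invFun x) (g.invFun x)) + (⨆ x : M, ‖Dop d f.invFun x - Dop d g.invFun x‖)

def c1Ball (f : C1Diffeo d M) (ε : ℝ) : Set (C1Diffeo d M) := {g | c1Dist d f g < ε}

/-- `U` is a neighborhood of `f` in the `C¹` topology. -/
def C1Nhd (f : C1Diffeo d M) (U : Set (C1Diffeo d M)) : Prop :=
  f ∈ U ∧ ∃ ε > 0, c1Ball d f ε ⊆ U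

def C1Open (U : Set (C1Diffeo d M)) : Prop := ∀ f ∈ U, ∃ ε > 0, c1Ball d f ε ⊆ U

def C1Dense (U : Set (C1Diffeo d M)) : Prop :=
  ∀ f : C1Diffeo d M, ∀ ε > 0, (c1Ball d f ε ∩ U).Nonempty

/-- A residual subset of `Diff¹(M)`: one containing a countable intersection of dense
open subsets. -/
def C1Residual (R : Set (C1Diffeo d M)) : Prop :=
  ∃ s : ℕ → Set (C1Diffeo d M), (∀ n, C1Open d (s n) ∧ C1Dense d (s n)) ∧ (⋂ n, s n) ⊆ R

/-- The (forward) orbit of a point. For a periodic point this is the full orbit. -/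
def orbitOf (f : M → M) (p : M) : Set M := {y | ∃ n : ℕ, f^[n] p = y}

/-- The stable space `E^s(a) = {v : ‖Df^n_a v‖ → 0}`. -/
def stableSubmodule (f : M → M) (a : M) : Submodule ℝ (Euc d) where
  carrier := {v | Tendsto (fun n : ℕ => ‖Dop d (f^[n]) a v‖) atTop (𝓝 0)}
  zero_mem' := by
    simp
  add_mem' := by
    intro v w hv hw
    have h := hv.add hw
    rw [add_zero] at h
    refine squeeze_zero (fun n => norm_nonneg _) (fun n => ?_) h
    simpa [map_add] using norm_add_le (Dop d (f^[n]) a v) (Dop d (f^[n]) a w)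
  smul_mem' := by
    intro c v hv
    have h : Tendsto (fun n : ℕ => ‖c‖ * ‖Dop d (f^[n]) a v‖) atTop (𝓝 0) := by
      have := (hv : Tendsto (fun n : ℕ => ‖Dop d (f^[n]) a v‖) atTop (𝓝 0)).const_mul ‖c‖
      simpa using this
    show Tendsto _ atTop (𝓝 0)
    refine h.congr fun n => ?_
    rw [map_smul, norm_smul]

/-- A hyperbolic splitting over an invariant set `Λ`, for the diffeomorphism `f`. -/
structure HypSplitting (f : C1Diffeo d M) (Λ : Set M) where
  Es : M → Submodule ℝ (Euc d)
  Eu : M → Submodule ℝ (Euc d)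
  C : ℝ
  lam : ℝ
  C_pos : 0 < C
  lam_mem : lam ∈ Set.Ioo (0:ℝ) 1
  inf_eq_bot : ∀ x ∈ Λ, Es x ⊓ Eu x = ⊥
  sup_eq_top : ∀ x ∈ Λ, Es x ⊔ Eu x = ⊤
  invariant_Es : ∀ x ∈ Λ, (Es x).map (Dop d f.toFun x).toLinearMap = Es (f.toFun x)
  invariant_Eu : ∀ x ∈ Λ, (Eu x).map (Dop d f.toFun x).toLinearMap = Eu (f.toFun x)
  contracting : ∀ x ∈ Λ, ∀ n : ℕ, normOn d (Dop d (f.toFun^[n]) x) (Es x) ≤ C * lam ^ n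
  expanding : ∀ x ∈ Λ, ∀ n : ℕ, normOn d (Dop d (f.invFun^[n]) x) (Eu x) ≤ C * lam ^ n

/-- A compact invariant set is hyperbolic if it carries a hyperbolic splitting. -/
def IsHyperbolicSet (f : C1Diffeo d M) (Λ : Set M) : Prop := Nonempty (HypSplitting d f Λ)

/-- `p` is a hyperbolic periodic point of `f`. -/
def IsHypPeriodicPt (f : C1Diffeo d M) (p : M) : Prop :=
  (∃ τ : ℕ, 0 < τ ∧ f.toFun^[τ] p = p) ∧ IsHyperbolicSet d f (orbitOf f.toFun p)

/-- The index of a hyperbolic periodic point: the dimension of its stable space. -/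
def ind (f : C1Diffeo d M) (p : M) : ℕ := Module.finrank ℝ (stableSubmodule d f.toFun p)

/-- The stable set of the orbit of `p` for the diffeomorphism `f`. -/
def Wstable (f : C1Diffeo d M) (p : M) : Set M :=
  {z | ∃ p' ∈ orbitOf f.toFun p,
    Tendsto (fun n : ℕ => dist (f.toFun^[n] z) (f.toFun^[n] p')) atTop (𝓝 0)}

/-- The unstable set of the orbit of `p` for the diffeomorphism `f`. -/
def Wunstable (f : C1Diffeo d M) (p : M) : Set M :=
  {z | ∃ p' ∈ orbitOf f.toFun p,
    Tendsto (fun n : ℕ => dist (f.invFun^[n] z) (f.invFun^[n] p')) atTop (𝓝 0)}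

/-- There is a transverse intersection point of `W^u(orb p)` and `W^s(orb q)`. -/
def TransverseInt (f : C1Diffeo d M) (p q : M) : Prop :=
  ∃ a, a ∈ Wunstable d f p ∧ a ∈ Wstable d f q ∧
    stableSubmodule d f.invFun a ⊔ stableSubmodule d f.toFun a = ⊤

/-- Two hyperbolic periodic points are homoclinically related. -/
def HomRelated (f : C1Diffeo d M) (p q : M) : Prop :=
  TransverseInt d f p q ∧ TransverseInt d f q p

/-- The homoclinic class of `p`: the closure of the set of hyperbolic periodic points
homoclinically related to `p`. -/
def homoclinicClass (f : C1Diffeo d M) (p : M) : Set M :=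
  closure {q | IsHypPeriodicPt d f q ∧ HomRelated d f p q}

/-- An `(m, λ)`-dominated splitting `E ⊕ F` over the invariant set `Λ`. -/
structure IsDomSplitting (f : C1Diffeo d M) (Λ : Set M)
    (E F : M → Submodule ℝ (Euc d)) (m : ℕ) (lam : ℝ) : Prop where
  m_pos : 0 < m
  lam_mem : lam ∈ Set.Ioo (0:ℝ) 1
  inf_eq_bot : ∀ x ∈ Λ, E x ⊓ F x = ⊥
  sup_eq_top : ∀ x ∈ Λ, E x ⊔ F x = ⊤
  invariant_E : ∀ x ∈ Λ, (E x).map (Dop d f.toFun x).toLinearMap = E (f.toFun x)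
  invariant_F : ∀ x ∈ Λ, (F x).map (Dop d f.toFun x).toLinearMap = F (f.toFun x)
  const_dim : ∀ x ∈ Λ, ∀ y ∈ Λ, Module.finrank ℝ (E x) = Module.finrank ℝ (E y)
  dominated : ∀ x ∈ Λ,
    normOn d (Dop d (f.toFun^[m]) x) (E x)
      * normOn d (Dop d (f.invFun^[m]) (f.toFun^[m] x)) (F (f.toFun^[m] x)) < lam

/-- The bundle `E` is (uniformly) contracted over `Λ`. -/
def IsContracted (f : C1Diffeo d M) (Λ : Set M) (E : M → Submodule ℝ (Euc d)) : Prop :=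
  ∃ C > 0, ∃ lam ∈ Set.Ioo (0:ℝ) 1, ∀ x ∈ Λ, ∀ n : ℕ,
    normOn d (Dop d (f.toFun^[n]) x) (E x) ≤ C * lam ^ n

/-- `x` is a `λ`-`E`-Pliss point for the map `g`. -/
def IsPlissPt (g : M → M) (E : M → Submodule ℝ (Euc d)) (lam : ℝ) (x : M) : Prop :=
  ∀ n : ℕ, 1 ≤ n →
    ∏ i ∈ Finset.range n, normOn d (Dop d g (g^[i] x)) (E (g^[i] x)) ≤ lam ^ n

/-- A set `K` is a `λ`-`E`-weak set: it contains no `λ`-`E`-Pliss point. -/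
def IsWeakSet (g : M → M) (E : M → Submodule ℝ (Euc d)) (lam : ℝ) (K : Set M) : Prop :=
  ∀ x ∈ K, ¬ IsPlissPt d g E lam x

/-- `x` is a `λ`-bi-Pliss point: a `λ`-`E`-Pliss point for `f` and a `λ`-`F`-Pliss point
for `f⁻¹`. -/
def IsBiPlissPt (f : C1Diffeo d M) (E F : M → Submodule ℝ (Euc d)) (lam : ℝ) (x : M) : Prop :=
  IsPlissPt d f.toFun E lam x ∧ IsPlissPt d f.invFun F lam x

/-- The ω-limit set of `y` under the map `g`: the set of accumulation points of the
forward orbit of `y`. -/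
def omegaLim (g : M → M) (y : M) : Set M :=
  {z | ∃ φ : ℕ → ℕ, StrictMono φ ∧ Tendsto (fun n => g^[φ n] y) atTop (𝓝 z)}

/-- The α-limit set of `y` under the diffeomorphism `f`: the set of accumulation points of
the backward orbit of `y`. -/
def alphaLim (f : C1Diffeo d M) (y : M) : Set M := omegaLim f.invFun y

/-- `b` is chain attainable from `a` for the map `g`: for every `ε > 0` there is an
`ε`-pseudo-orbit from `a` to `b`. -/
def ChainAttain (g : M → M) (a b : M) : Prop :=
  ∀ ε > 0, ∃ (n : ℕ) (x : ℕ → M), 1 ≤ n ∧ x 0 = a ∧ x n = b ∧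
    ∀ i < n, dist (g (x i)) (x (i + 1)) < ε

/-- The chain recurrence class of `p` for the map `g`. -/
def chainClass (g : M → M) (p : M) : Set M :=
  {z | ChainAttain g z p ∧ ChainAttain g p z}

/-- The set of Lyapunov exponents of a periodic orbit of period `τ`:
the numbers `(1/τ) log |μ|` over the complex eigenvalues `μ` of the complexification of
`D(f^τ)_p`. -/
def lyapunovExps (f : M → M) (p : M) (τ : ℕ) : Set ℝ :=
  {χ | ∃ μ : ℂ,
    Module.End.HasEigenvalue (LinearMap.baseChange ℂ (Dop d (f^[τ]) p).toLinearMap) μ ∧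
    χ = Real.log ‖μ‖ / τ}

/-- The spectral radius of the restriction of `A` to an `A`-invariant subspace `V`:
the supremum of the moduli of the complex eigenvalues of the complexification of the
restriction `A|V`. -/
def spectralRadiusOn (A : Euc d →L[ℝ] Euc d) (V : Submodule ℝ (Euc d))
    (h : ∀ v ∈ V, A v ∈ V) : ℝ :=
  sSup {r | ∃ μ : ℂ,
    Module.End.HasEigenvalue (LinearMap.baseChange ℂ (A.toLinearMap.restrict h)) μ ∧
    r = ‖μ‖}

end


-- ======================= auxiliary material =======================
section Aux
open Finset Metric

open Finset Metric

lemma geom_sum_le' {lam : ℝ} (h0 : 0 ≤ lam) (h1 : lam < 1) (n : ℕ) :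
    ∑ k ∈ Finset.range n, lam ^ k ≤ (1 - lam)⁻¹ := by
  refine le_trans (Summable.sum_le_tsum _ (fun i _ => by positivity)
    (summable_geometric_of_lt_one h0 h1)) ?_
  rw [tsum_geometric_of_lt_one h0 h1]

lemma discrete_shadow {E : Type*} [NormedAddCommGroup E] [NormedSpace ℝ E] [CompleteSpace E]
    (A B Ps Pu : E →L[ℝ] E) (C lam : ℝ) (hlam0 : 0 ≤ lam) (hlam1 : lam < 1) (hC : 0 ≤ C)
    (hAB : ∀ x, A (B x) = x) (hPsPu : ∀ x, Ps x + Pu x = x)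
    (hA : ∀ k x, ‖(A ^ k) (Ps x)‖ ≤ C * lam ^ k * ‖Ps x‖)
    (hB : ∀ k x, ‖(B ^ k) (Pu x)‖ ≤ C * lam ^ k * ‖Pu x‖)
    (C₁ : ℝ) (hC₁ : C₁ = C * (‖Ps‖ + ‖Pu‖) * (1 - lam)⁻¹)
    (G : E → E) (x₀ : E) (r ε δ : ℝ) (hδ : 0 ≤ δ) (hε : 0 ≤ ε)
    (hG : ∀ u ∈ ball x₀ r, ∀ v ∈ ball x₀ r, ‖G u - G v - A (u - v)‖ ≤ ε * ‖u - v‖)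
    (hsmall : C₁ * ε ≤ 1/2)
    (hρr : 2 * (C₁ * δ) + δ ≤ r / 4)
    (n : ℕ) (w : ℕ → E) (hw : ∀ i ≤ n, w i ∈ closedBall x₀ (r/2))
    (herr : ∀ i < n, ‖G (w i) - w (i+1)‖ ≤ δ) :
    ∃ z : ℕ → E, (∀ i < n, z (i+1) = G (z i)) ∧ (∀ i ≤ n, ‖z i - w i‖ ≤ 2 * (C₁ * δ)) := by
  have h1lam : 0 < 1 - lam := by linarith
  have hC₁0 : 0 ≤ C₁ := by
    rw [hC₁]; positivity
  set ρ : ℝ := 2 * (C₁ * δ) + δ with hρdef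
  have hρ0 : 0 ≤ ρ := by positivity
  have hr4 : 0 ≤ r := by nlinarith
  -- the Green operator
  set Kf : (ℕ → E) → ℕ → E := fun e i =>
    (∑ j ∈ Finset.range i, (A ^ (i - 1 - j)) (Ps (e j)))
      - ∑ j ∈ Finset.Ico i n, (B ^ (j + 1 - i)) (Pu (e j)) with hKf
  -- recursion property
  have Krec : ∀ (e : ℕ → E), ∀ i, i < n → Kf e (i + 1) = A (Kf e i) + e i := by
    intro e i hi
    have h1 : ∀ j ∈ Finset.range i, A ((A ^ (i - 1 - j)) (Ps (e j))) = (A ^ (i - j)) (Ps (e j)) := by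
      intro j hj
      rw [Finset.mem_range] at hj
      have : i - j = (i - 1 - j) + 1 := by omega
      rw [this, pow_succ', ContinuousLinearMap.mul_apply]
    have h2 : ∀ j ∈ Finset.Ico i n, A ((B ^ (j + 1 - i)) (Pu (e j))) = (B ^ (j - i)) (Pu (e j)) := by
      intro j hj
      rw [Finset.mem_Ico] at hj
      have : j + 1 - i = (j - i) + 1 := by omega
      rw [this, pow_succ', ContinuousLinearMap.mul_apply, hAB]
    have expand : A (Kf e i) = (∑ j ∈ Finset.range i, (A ^ (i - j)) (Ps (e j)))
        - ∑ j ∈ Finset.Ico i n, (B ^ (j - i)) (Pu (e j)) := by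
      rw [hKf]
      simp only [map_sub, map_sum]
      rw [Finset.sum_congr rfl h1, Finset.sum_congr rfl h2]
    have hsplit : ∑ j ∈ Finset.Ico i n, (B ^ (j - i)) (Pu (e j))
        = Pu (e i) + ∑ j ∈ Finset.Ico (i+1) n, (B ^ (j - i)) (Pu (e j)) := by
      rw [Finset.sum_eq_sum_Ico_succ_bot hi]
      simp
    have hrange : ∑ j ∈ Finset.range (i+1), (A ^ (i + 1 - 1 - j)) (Ps (e j))
        = (∑ j ∈ Finset.range i, (A ^ (i - j)) (Ps (e j))) + Ps (e i) := by
      simp only [Nat.add_sub_cancel]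
      rw [Finset.sum_range_succ, Nat.sub_self, pow_zero]
      simp
    have hIco : ∑ j ∈ Finset.Ico (i+1) n, (B ^ (j + 1 - (i+1))) (Pu (e j))
        = ∑ j ∈ Finset.Ico (i+1) n, (B ^ (j - i)) (Pu (e j)) := by
      apply Finset.sum_congr rfl
      intro j hj
      congr 2
      rw [Finset.mem_Ico] at hj
      omega
    have key : ∀ a b c ps pu : E, ps + pu = c → (a + ps) - b = (a - (pu + b)) + c := by
      intro a b c ps pu h; rw [← h]; abel
    show (∑ j ∈ Finset.range (i+1), (A ^ (i + 1 - 1 - j)) (Ps (e j)))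
      - ∑ j ∈ Finset.Ico (i+1) n, (B ^ (j + 1 - (i+1))) (Pu (e j)) = A (Kf e i) + e i
    rw [expand, hrange, hIco, hsplit]
    exact key _ _ _ _ _ (hPsPu (e i))
  -- bound property
  have Kbound : ∀ (e : ℕ → E) (dd : ℝ), 0 ≤ dd → (∀ j, j < n → ‖e j‖ ≤ dd) →
      ∀ i, i ≤ n → ‖Kf e i‖ ≤ C₁ * dd := by
    intro e dd hdd he i hi
    have bnd1 : ‖∑ j ∈ Finset.range i, (A ^ (i - 1 - j)) (Ps (e j))‖
        ≤ C * ‖Ps‖ * dd * (1 - lam)⁻¹ := by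
      calc ‖∑ j ∈ Finset.range i, (A ^ (i - 1 - j)) (Ps (e j))‖
          ≤ ∑ j ∈ Finset.range i, ‖(A ^ (i - 1 - j)) (Ps (e j))‖ := norm_sum_le _ _
        _ ≤ ∑ j ∈ Finset.range i, C * ‖Ps‖ * dd * lam ^ (i - 1 - j) := by
            apply Finset.sum_le_sum
            intro j hj
            rw [Finset.mem_range] at hj
            calc ‖(A ^ (i - 1 - j)) (Ps (e j))‖ ≤ C * lam ^ (i - 1 - j) * ‖Ps (e j)‖ := hA _ _
              _ ≤ C * lam ^ (i - 1 - j) * (‖Ps‖ * dd) := by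
                  apply mul_le_mul_of_nonneg_left _ (by positivity)
                  exact le_trans (Ps.le_opNorm _)
                    (mul_le_mul_of_nonneg_left (he j (by omega)) (norm_nonneg _))
              _ = C * ‖Ps‖ * dd * lam ^ (i - 1 - j) := by ring
        _ = C * ‖Ps‖ * dd * ∑ j ∈ Finset.range i, lam ^ (i - 1 - j) := by
            rw [Finset.mul_sum]
        _ ≤ C * ‖Ps‖ * dd * (1 - lam)⁻¹ := by
            apply mul_le_mul_of_nonneg_left _ (by positivity)
            rw [Finset.sum_range_reflect (fun j => lam ^ j) i]
            exact geom_sum_le' hlam0 hlam1 i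
    have bnd2 : ‖∑ j ∈ Finset.Ico i n, (B ^ (j + 1 - i)) (Pu (e j))‖
        ≤ C * ‖Pu‖ * dd * (1 - lam)⁻¹ := by
      calc ‖∑ j ∈ Finset.Ico i n, (B ^ (j + 1 - i)) (Pu (e j))‖
          ≤ ∑ j ∈ Finset.Ico i n, ‖(B ^ (j + 1 - i)) (Pu (e j))‖ := norm_sum_le _ _
        _ ≤ ∑ j ∈ Finset.Ico i n, C * ‖Pu‖ * dd * lam ^ (j + 1 - i) := by
            apply Finset.sum_le_sum
            intro j hj
            rw [Finset.mem_Ico] at hj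
            calc ‖(B ^ (j + 1 - i)) (Pu (e j))‖ ≤ C * lam ^ (j + 1 - i) * ‖Pu (e j)‖ := hB _ _
              _ ≤ C * lam ^ (j + 1 - i) * (‖Pu‖ * dd) := by
                  apply mul_le_mul_of_nonneg_left _ (by positivity)
                  exact le_trans (Pu.le_opNorm _)
                    (mul_le_mul_of_nonneg_left (he j hj.2) (norm_nonneg _))
              _ = C * ‖Pu‖ * dd * lam ^ (j + 1 - i) := by ring
        _ = C * ‖Pu‖ * dd * ∑ j ∈ Finset.Ico i n, lam ^ (j + 1 - i) := by
            rw [Finset.mul_sum]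
        _ ≤ C * ‖Pu‖ * dd * (1 - lam)⁻¹ := by
            apply mul_le_mul_of_nonneg_left _ (by positivity)
            rw [Finset.sum_Ico_eq_sum_range]
            have : ∀ k, lam ^ (i + k + 1 - i) = lam ^ (k+1) := by
              intro k; congr 1; omega
            calc ∑ k ∈ Finset.range (n - i), lam ^ (i + k + 1 - i)
                = ∑ k ∈ Finset.range (n - i), lam ^ (k + 1) := by
                  exact Finset.sum_congr rfl (fun k _ => this k)
              _ ≤ ∑ k ∈ Finset.range (n - i), lam ^ k := by
                  apply Finset.sum_le_sum
                  intro k _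
                  exact pow_le_pow_of_le_one hlam0 (le_of_lt hlam1) (Nat.le_succ k)
              _ ≤ (1 - lam)⁻¹ := geom_sum_le' hlam0 hlam1 _
    calc ‖Kf e i‖ ≤ ‖∑ j ∈ Finset.range i, (A ^ (i - 1 - j)) (Ps (e j))‖
          + ‖∑ j ∈ Finset.Ico i n, (B ^ (j + 1 - i)) (Pu (e j))‖ := norm_sub_le _ _
      _ ≤ C * ‖Ps‖ * dd * (1 - lam)⁻¹ + C * ‖Pu‖ * dd * (1 - lam)⁻¹ := add_le_add bnd1 bnd2
      _ = C₁ * dd := by rw [hC₁]; ring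
  -- linearity in e
  have Ksub : ∀ (e e' : ℕ → E) (i : ℕ), Kf e i - Kf e' i = Kf (fun j => e j - e' j) i := by
    intro e e' i
    rw [hKf]
    simp only [map_sub, Finset.sum_sub_distrib]
    abel
  -- degenerate case
  rcases hδ.eq_or_lt with heq | hδpos
  · refine ⟨w, fun i hi => ?_, fun i _ => by simp [← heq]⟩
    have h := herr i hi
    rw [← heq] at h
    exact (sub_eq_zero.mp (norm_le_zero_iff.mp h)).symm
  have hρpos : 0 < ρ := by positivity
  have hrpos : 0 < r := by linarith
  -- extension of finite vectors
  set ext' : (Fin (n+1) → E) → ℕ → E := fun v j => if h : j < n + 1 then v ⟨j, h⟩ else 0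
    with hext
  have ext_norm : ∀ (v : Fin (n+1) → E) (j : ℕ), ‖ext' v j‖ ≤ ‖v‖ := by
    intro v j
    rw [hext]
    by_cases h : j < n + 1
    · simp only [dif_pos h]
      exact norm_le_pi_norm v _
    · simp only [dif_neg h, norm_zero]
      exact norm_nonneg _
  have ext_sub : ∀ (v v' : Fin (n+1) → E) (j : ℕ), ext' v j - ext' v' j = ext' (v - v') j := by
    intro v v' j
    rw [hext]
    by_cases h : j < n + 1
    · simp only [dif_pos h]; rfl
    · simp only [dif_neg h, sub_zero]
  have ext_eq : ∀ (v : Fin (n+1) → E) (j : ℕ) (h : j < n + 1), ext' v j = v ⟨j, h⟩ := by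
    intro v j h; rw [hext]; simp only [dif_pos h]
  -- one-step error functional
  set hfn : (ℕ → E) → ℕ → E := fun v j => G (w j + v j) - A (v j) - w (j+1) with hhfn
  -- memberships
  have memw : ∀ j, j ≤ n → w j ∈ ball x₀ r := by
    intro j hj
    have := hw j hj
    rw [mem_closedBall] at this
    rw [mem_ball]
    linarith
  have memwv : ∀ (v : Fin (n+1) → E), ‖v‖ ≤ ρ → ∀ j, j ≤ n → w j + ext' v j ∈ ball x₀ r := by
    intro v hv j hj
    rw [mem_ball, dist_eq_norm]
    have h1 : ‖w j + ext' v j - x₀‖ ≤ ‖w j - x₀‖ + ‖ext' v j‖ := by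
      have : w j + ext' v j - x₀ = (w j - x₀) + ext' v j := by abel
      rw [this]; exact norm_add_le _ _
    have h2 : ‖w j - x₀‖ ≤ r / 2 := by
      have := hw j hj; rwa [mem_closedBall, dist_eq_norm] at this
    have h3 : ‖ext' v j‖ ≤ ρ := le_trans (ext_norm v j) hv
    linarith
  -- error bound
  have hfe : ∀ (v : Fin (n+1) → E), ‖v‖ ≤ ρ → ∀ j, j < n → ‖hfn (ext' v) j‖ ≤ ε * ‖v‖ + δ := by
    intro v hv j hj
    have hdecomp : hfn (ext' v) j
        = (G (w j + ext' v j) - G (w j) - A ((w j + ext' v j) - (w j))) + (G (w j) - w (j+1)) := by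
      rw [hhfn]
      simp only [add_sub_cancel_left]
      abel
    rw [hdecomp]
    refine le_trans (norm_add_le _ _) (add_le_add ?_ (herr j hj))
    refine le_trans (hG _ (memwv v hv j (le_of_lt hj)) _ (memw j (le_of_lt hj))) ?_
    rw [add_sub_cancel_left]
    exact mul_le_mul_of_nonneg_left (ext_norm v j) hε
  -- Lipschitz bound on the error functional
  have hflip : ∀ (v v' : Fin (n+1) → E), ‖v‖ ≤ ρ → ‖v'‖ ≤ ρ → ∀ j, j < n →
      ‖hfn (ext' v) j - hfn (ext' v') j‖ ≤ ε * ‖v - v'‖ := by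
    intro v v' hv hv' j hj
    have hdecomp : hfn (ext' v) j - hfn (ext' v') j
        = G (w j + ext' v j) - G (w j + ext' v' j)
          - A ((w j + ext' v j) - (w j + ext' v' j)) := by
      rw [hhfn]
      simp only [map_sub, map_add]
      abel
    rw [hdecomp]
    refine le_trans (hG _ (memwv v hv j (le_of_lt hj)) _ (memwv v' hv' j (le_of_lt hj))) ?_
    have : (w j + ext' v j) - (w j + ext' v' j) = ext' (v - v') j := by
      rw [← ext_sub]; abel
    rw [this]
    exact mul_le_mul_of_nonneg_left (ext_norm _ j) hε
  -- the fixed point map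
  set T : (Fin (n+1) → E) → (Fin (n+1) → E) := fun v i => Kf (hfn (ext' v)) i.val with hT
  have hTval : ∀ (v : Fin (n+1) → E) (i : Fin (n+1)), T v i = Kf (hfn (ext' v)) i.val := by
    intro v i; rw [hT]
  have hTnorm : ∀ (v : Fin (n+1) → E), ‖v‖ ≤ ρ → ‖T v‖ ≤ C₁ * (ε * ‖v‖ + δ) := by
    intro v hv
    have hnn : (0:ℝ) ≤ C₁ * (ε * ‖v‖ + δ) := by positivity
    rw [pi_norm_le_iff_of_nonneg hnn]
    intro i
    rw [hTval]
    exact Kbound _ _ (by positivity) (fun j hj => hfe v hv j hj) i.val (Nat.lt_succ_iff.mp i.isLt)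
  have hTmap : ∀ (v : Fin (n+1) → E), ‖v‖ ≤ ρ → ‖T v‖ ≤ ρ := by
    intro v hv
    refine le_trans (hTnorm v hv) ?_
    have h1 : C₁ * (ε * ‖v‖ + δ) = (C₁ * ε) * ‖v‖ + C₁ * δ := by ring
    rw [h1]
    have h2 : (C₁ * ε) * ‖v‖ ≤ (1/2) * ρ := by
      have := mul_le_mul hsmall hv (norm_nonneg _) (by norm_num)
      linarith
    have h3 : C₁ * δ ≤ ρ / 2 := by rw [hρdef]; linarith
    linarith
  have hTlip : ∀ (v v' : Fin (n+1) → E), ‖v‖ ≤ ρ → ‖v'‖ ≤ ρ →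
      ‖T v - T v'‖ ≤ (1/2) * ‖v - v'‖ := by
    intro v v' hv hv'
    have hnn : (0:ℝ) ≤ (1/2) * ‖v - v'‖ := by positivity
    rw [pi_norm_le_iff_of_nonneg hnn]
    intro i
    have hcomp : (T v - T v') i = Kf (fun j => hfn (ext' v) j - hfn (ext' v') j) i.val := by
      have : (T v - T v') i = T v i - T v' i := rfl
      rw [this, hTval, hTval, Ksub]
    rw [hcomp]
    refine le_trans (Kbound _ (ε * ‖v - v'‖) (by positivity)
      (fun j hj => hflip v v' hv hv' j hj) i.val (Nat.lt_succ_iff.mp i.isLt)) ?_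
    have : C₁ * (ε * ‖v - v'‖) = (C₁ * ε) * ‖v - v'‖ := by ring
    rw [this]
    exact mul_le_mul_of_nonneg_right hsmall (norm_nonneg _)
  -- fixed point via Banach
  haveI : Nonempty (closedBall (0 : Fin (n+1) → E) ρ) := ⟨⟨0, mem_closedBall_self hρ0⟩⟩
  haveI : CompleteSpace (closedBall (0 : Fin (n+1) → E) ρ) :=
    Metric.isClosed_closedBall.completeSpace_coe
  set T' : (closedBall (0 : Fin (n+1) → E) ρ) → (closedBall (0 : Fin (n+1) → E) ρ) :=
    fun v => ⟨T v.1, by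
      rw [mem_closedBall_zero_iff]
      exact hTmap v.1 (mem_closedBall_zero_iff.mp v.2)⟩ with hT'
  have hcontr : ContractingWith (⟨1/2, by norm_num⟩ : NNReal) T' := by
    constructor
    · exact NNReal.coe_lt_coe.mp (by norm_num : (1/2:ℝ) < 1)
    · refine LipschitzWith.of_dist_le_mul fun a b => ?_
      rw [hT']
      show dist (T a.1) (T b.1) ≤ (1/2 : ℝ) * dist a.1 b.1
      rw [dist_eq_norm, dist_eq_norm]
      exact hTlip a.1 b.1 (mem_closedBall_zero_iff.mp a.2) (mem_closedBall_zero_iff.mp b.2)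
  have hex : ∃ vv : Fin (n+1) → E, ‖vv‖ ≤ ρ ∧ T vv = vv := by
    refine ⟨(ContractingWith.fixedPoint T' hcontr).1,
      mem_closedBall_zero_iff.mp (ContractingWith.fixedPoint T' hcontr).2, ?_⟩
    have hfixpt : T' (ContractingWith.fixedPoint T' hcontr)
        = ContractingWith.fixedPoint T' hcontr := hcontr.fixedPoint_isFixedPt
    exact congrArg Subtype.val hfixpt
  obtain ⟨v, hvρ, hvT⟩ := hex
  have hvsmall : ‖v‖ ≤ 2 * (C₁ * δ) := by
    have h1 : ‖v‖ = ‖T v‖ := by rw [hvT]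
    have h2 : ‖T v‖ ≤ C₁ * (ε * ‖v‖ + δ) := hTnorm v hvρ
    have h3 : (C₁ * ε) * ‖v‖ ≤ (1/2) * ‖v‖ :=
      mul_le_mul_of_nonneg_right hsmall (norm_nonneg _)
    have h4 : C₁ * (ε * ‖v‖ + δ) = (C₁ * ε) * ‖v‖ + C₁ * δ := by ring
    linarith
  -- the orbit
  refine ⟨fun i => w i + ext' v i, ?_, ?_⟩
  · intro i hi
    have hi1 : i < n + 1 := by omega
    have hi2 : i + 1 < n + 1 := by omega
    have hfix : ∀ (j : ℕ) (hj : j < n+1), ext' v j = Kf (hfn (ext' v)) j := by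
      intro j hj
      have h := congrFun hvT ⟨j, hj⟩
      rw [hTval] at h
      rw [ext_eq v j hj]
      exact h.symm
    show w (i+1) + ext' v (i+1) = G (w i + ext' v i)
    rw [hfix (i+1) hi2, Krec (hfn (ext' v)) i hi, ← hfix i hi1]
    have hexp : hfn (ext' v) i = G (w i + ext' v i) - A (ext' v i) - w (i+1) := by rw [hhfn]
    rw [hexp]
    abel
  · intro i hi
    have : w i + ext' v i - w i = ext' v i := by abel
    rw [this]
    exact le_trans (ext_norm v i) hvsmall


theorem Dop_iterate_fixed (d : ℕ) {M : Type*} [MetricSpace M]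
    [ChartedSpace (Euc d) M] [IsManifold (𝓡 d) ((⊤ : ℕ∞) : WithTop ℕ∞) M]
    (g : M → M) (hg : MDifferentiable (𝓡 d) (𝓡 d) g) (p : M) (hp : g p = p) :
    ∀ n : ℕ, Dop d (g^[n]) p = (Dop d g p) ^ n := by
  have hgiter : ∀ k : ℕ, MDifferentiable (𝓡 d) (𝓡 d) (g^[k]) := by
    intro k
    induction k with
    | zero => simpa using mdifferentiable_id
    | succ k ih =>
      rw [Function.iterate_succ']
      exact hg.comp ih
  intro n
  induction n with
  | zero =>
    rw [Function.iterate_zero, pow_zero]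
    show mfderiv (𝓡 d) (𝓡 d) id p = _
    rw [mfderiv_id]
    rfl
  | succ k ih =>
    have hpk : g^[k] p = p := Function.iterate_fixed hp k
    have hcomp : Dop d (g^[k+1]) p = (Dop d g (g^[k] p)).comp (Dop d (g^[k]) p) := by
      show mfderiv (𝓡 d) (𝓡 d) (g^[k+1]) p = _
      rw [Function.iterate_succ']
      exact mfderiv_comp p (hg _) ((hgiter k) p)
    rw [hcomp, hpk, ih, pow_succ']
    rfl

end Aux
-- ===================================================================

set_option maxHeartbeats 1600000

/-- consequence of the λ-lemma. Let `p` be a hyperbolic fixed point of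
`f`, `y ∈ W^u(p)` and `y' ∈ W^s(p)`. Then for all neighborhoods `V_y` of `y` and `V_{y'}`
of `y'`, there is `l` such that for every `n ≥ l` some point `z ∈ V_{y'}` satisfies
`f^n(z) ∈ V_y`. -/
theorem statement10 (d : ℕ) (M : Type*) [MetricSpace M] [CompactSpace M]
    [ChartedSpace (Euc d) M] [IsManifold (𝓡 d) ((⊤ : ℕ∞) : WithTop ℕ∞) M]
    (f : C1Diffeo d M) (p : M) (hfix : f.toFun p = p)
    (Es Eu : Submodule ℝ (Euc d)) (C lam : ℝ) (hC : 0 < C) (hlam : lam ∈ Set.Ioo (0:ℝ) 1)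
    (hinf : Es ⊓ Eu = ⊥) (hsup : Es ⊔ Eu = ⊤)
    (hinvs : Es.map (Dop d f.toFun p).toLinearMap = Es) (hinvu : Eu.map (Dop d f.toFun p).toLinearMap = Eu)
    (hcon : ∀ n : ℕ, normOn d (Dop d (f.toFun^[n]) p) Es ≤ C * lam ^ n)
    (hexp : ∀ n : ℕ, normOn d (Dop d (f.invFun^[n]) p) Eu ≤ C * lam ^ n)
    (y y' : M)
    (hy : Filter.Tendsto (fun n : ℕ => dist (f.invFun^[n] y) p) Filter.atTop (nhds 0))
    (hy' : Filter.Tendsto (fun n : ℕ => dist (f.toFun^[n] y') p) Filter.atTop (nhds 0)) :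
    ∀ Vy ∈ nhds y, ∀ Vy' ∈ nhds y', ∃ l : ℕ, ∀ n : ℕ, l ≤ n →
      ∃ z ∈ Vy', f.toFun^[n] z ∈ Vy := by
  intro Vy hVy Vy' hVy'
  classical
  -- differentiability
  have hmds : MDifferentiable (𝓡 d) (𝓡 d) f.toFun := f.contMDiff_toFun.mdifferentiable one_ne_zero
  have hmdi : MDifferentiable (𝓡 d) (𝓡 d) f.invFun := f.contMDiff_invFun.mdifferentiable one_ne_zero
  have hfixinv : f.invFun p = p := by
    have h := f.left_inv p
    rw [hfix] at h
    exact h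
  have hlam0 : (0:ℝ) ≤ lam := le_of_lt hlam.1
  have hlam1 : lam < 1 := hlam.2
  have hC0 : (0:ℝ) ≤ C := le_of_lt hC
  set A := Dop d f.toFun p with hAdef
  set B := Dop d f.invFun p with hBdef
  -- A ∘ B = id
  have hAB : ∀ x : Euc d, A (B x) = x := by
    have hco : f.toFun ∘ f.invFun = id := funext f.right_inv
    have h1 : Dop d (f.toFun ∘ f.invFun) p
        = (Dop d f.toFun (f.invFun p)).comp (Dop d f.invFun p) :=
      mfderiv_comp p (hmds _) (hmdi p)
    rw [hfixinv] at h1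
    have h2 : Dop d (f.toFun ∘ f.invFun) p = ContinuousLinearMap.id ℝ (Euc d) := by
      rw [hco]
      show mfderiv (𝓡 d) (𝓡 d) id p = _
      rw [mfderiv_id]
      rfl
    intro x
    have h3 : (A.comp B) x = (ContinuousLinearMap.id ℝ (Euc d)) x := by
      rw [← h1, h2]
    simpa using h3
  -- projections
  have hcompl : IsCompl Es Eu := ⟨disjoint_iff.mpr hinf, codisjoint_iff.mpr hsup⟩
  set Ps : Euc d →L[ℝ] Euc d :=
    LinearMap.toContinuousLinearMap (Es.subtype ∘ₗ (Es.linearProjOfIsCompl Eu hcompl)) with hPsdef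
  set Pu : Euc d →L[ℝ] Euc d :=
    LinearMap.toContinuousLinearMap
      (Eu.subtype ∘ₗ (Eu.linearProjOfIsCompl Es hcompl.symm)) with hPudef
  have hPsPu : ∀ x : Euc d, Ps x + Pu x = x := by
    intro x
    exact Submodule.projection_add_projection_eq_self hcompl x
  have hPsmem : ∀ x, Ps x ∈ Es := fun x => ((Es.linearProjOfIsCompl Eu hcompl) x).2
  have hPumem : ∀ x, Pu x ∈ Eu := fun x => ((Eu.linearProjOfIsCompl Es hcompl.symm) x).2
  -- hyperbolic estimates
  have hAes : ∀ (k : ℕ) (v : Euc d), v ∈ Es → ‖(A ^ k) v‖ ≤ C * lam ^ k * ‖v‖ := by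
    intro k v hv
    have hDk : Dop d (f.toFun^[k]) p = A ^ k := Dop_iterate_fixed d f.toFun hmds p hfix k
    have h1 : (A ^ k) v = ((Dop d (f.toFun^[k]) p).comp Es.subtypeL) ⟨v, hv⟩ := by
      rw [hDk]; rfl
    have hcon' : ‖(Dop d (f.toFun^[k]) p).comp Es.subtypeL‖ ≤ C * lam ^ k := hcon k
    rw [h1]
    calc ‖((Dop d (f.toFun^[k]) p).comp Es.subtypeL) ⟨v, hv⟩‖
        ≤ ‖(Dop d (f.toFun^[k]) p).comp Es.subtypeL‖ * ‖(⟨v, hv⟩ : Es)‖ :=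
          ContinuousLinearMap.le_opNorm _ _
      _ ≤ (C * lam ^ k) * ‖v‖ := by
          rw [Submodule.coe_norm]
          exact mul_le_mul_of_nonneg_right hcon' (norm_nonneg _)
  have hBeu : ∀ (k : ℕ) (v : Euc d), v ∈ Eu → ‖(B ^ k) v‖ ≤ C * lam ^ k * ‖v‖ := by
    intro k v hv
    have hDk : Dop d (f.invFun^[k]) p = B ^ k := Dop_iterate_fixed d f.invFun hmdi p hfixinv k
    have h1 : (B ^ k) v = ((Dop d (f.invFun^[k]) p).comp Eu.subtypeL) ⟨v, hv⟩ := by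
      rw [hDk]; rfl
    have hexp' : ‖(Dop d (f.invFun^[k]) p).comp Eu.subtypeL‖ ≤ C * lam ^ k := hexp k
    rw [h1]
    calc ‖((Dop d (f.invFun^[k]) p).comp Eu.subtypeL) ⟨v, hv⟩‖
        ≤ ‖(Dop d (f.invFun^[k]) p).comp Eu.subtypeL‖ * ‖(⟨v, hv⟩ : Eu)‖ :=
          ContinuousLinearMap.le_opNorm _ _
      _ ≤ (C * lam ^ k) * ‖v‖ := by
          rw [Submodule.coe_norm]
          exact mul_le_mul_of_nonneg_right hexp' (norm_nonneg _)
  have hA : ∀ (k : ℕ) (x : Euc d), ‖(A ^ k) (Ps x)‖ ≤ C * lam ^ k * ‖Ps x‖ :=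
    fun k x => hAes k _ (hPsmem x)
  have hB : ∀ (k : ℕ) (x : Euc d), ‖(B ^ k) (Pu x)‖ ≤ C * lam ^ k * ‖Pu x‖ :=
    fun k x => hBeu k _ (hPumem x)
  -- constants
  set C₁ : ℝ := C * (‖Ps‖ + ‖Pu‖) * (1 - lam)⁻¹ with hC₁def
  have h1lam : (0:ℝ) < 1 - lam := by linarith
  have hC₁0 : 0 ≤ C₁ := by
    rw [hC₁def]
    apply mul_nonneg (mul_nonneg hC0 (add_nonneg (norm_nonneg _) (norm_nonneg _)))
    exact inv_nonneg.mpr (le_of_lt h1lam)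
  set ε : ℝ := 1 / (2*(C₁+1)) with hεdef
  have hε0 : 0 < ε := by rw [hεdef]; positivity
  have hsmall : C₁ * ε ≤ 1/2 := by
    rw [hεdef, mul_one_div, div_le_div_iff₀ (by linarith) (by norm_num)]
    linarith
  -- chart setup
  set φ := extChartAt (𝓡 d) p with hφdef
  set x₀ := φ p with hx₀def
  set G : Euc d → Euc d := ↑φ ∘ f.toFun ∘ ↑φ.symm with hGdef
  have hrangeI : Set.range ↑(𝓡 d) = (Set.univ : Set (Euc d)) := (𝓡 d).range_eq_univ
  have hwritten : writtenInExtChartAt (𝓡 d) (𝓡 d) p f.toFun = G := by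
    unfold writtenInExtChartAt
    rw [hfix]
  have hAfd : A = fderiv ℝ G x₀ := by
    rw [hAdef]
    show mfderiv (𝓡 d) (𝓡 d) f.toFun p = _
    rw [(hmds p).mfderiv, hwritten, hrangeI, fderivWithin_univ]
  -- smoothness of G near x₀
  have hcda : ContDiffAt ℝ 1 G x₀ := by
    have h1 : ContMDiffAt (𝓡 d) (𝓡 d) 1 f.toFun p := f.contMDiff_toFun p
    rw [contMDiffAt_iff] at h1
    have h2 := h1.2
    rw [hfix] at h2
    rw [hrangeI, contDiffWithinAt_univ] at h2
    exact_mod_cast h2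
  obtain ⟨u, hu, hcdu⟩ := hcda.contDiffOn le_rfl (by simp)
  obtain ⟨u', hu'sub, hu'open, hx₀u'⟩ := mem_nhds_iff.mp hu
  have hcdu' : ContDiffOn ℝ 1 G u' := hcdu.mono hu'sub
  have hdiffu' : ∀ x ∈ u', DifferentiableAt ℝ G x := fun x hx =>
    (hcdu'.differentiableOn one_ne_zero).differentiableAt (hu'open.mem_nhds hx)
  have hcontfd : ContinuousOn (fderiv ℝ G) u' := hcdu'.continuousOn_fderiv_of_isOpen hu'open le_rfl
  have hcont_at : ContinuousAt (fderiv ℝ G) x₀ := hcontfd.continuousAt (hu'open.mem_nhds hx₀u')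
  obtain ⟨r₁, hr₁pos, hr₁⟩ := Metric.continuousAt_iff.mp hcont_at ε hε0
  -- geometric neighborhood conditions
  have hsymmx₀ : φ.symm x₀ = p := by
    rw [hx₀def]
    exact φ.left_inv (mem_extChartAt_source p)
  have hψcont : ContinuousAt (fun xx : Euc d => f.toFun (φ.symm xx)) x₀ := by
    apply ContinuousAt.comp
    · rw [hsymmx₀]
      exact f.contMDiff_toFun.continuous.continuousAt
    · exact continuousAt_extChartAt_symm p
  have hsrcmem : {xx : Euc d | f.toFun (φ.symm xx) ∈ φ.source} ∈ 𝓝 x₀ := by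
    apply hψcont.preimage_mem_nhds
    have : f.toFun (φ.symm x₀) = p := by rw [hsymmx₀, hfix]
    rw [this]
    exact (isOpen_extChartAt_source p).mem_nhds (mem_extChartAt_source p)
  have hbigmem : u' ∩ Metric.ball x₀ r₁ ∩ φ.target
      ∩ {xx : Euc d | f.toFun (φ.symm xx) ∈ φ.source} ∈ 𝓝 x₀ := by
    refine Filter.inter_mem (Filter.inter_mem (Filter.inter_mem ?_ ?_) ?_) hsrcmem
    · exact hu'open.mem_nhds hx₀u'
    · exact Metric.ball_mem_nhds x₀ hr₁pos
    · exact extChartAt_target_mem_nhds p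
  obtain ⟨r, hrpos, hrsub⟩ := Metric.mem_nhds_iff.mp hbigmem
  -- mean value estimate
  have hGlip : ∀ uu ∈ Metric.ball x₀ r, ∀ vv ∈ Metric.ball x₀ r,
      ‖G uu - G vv - A (uu - vv)‖ ≤ ε * ‖uu - vv‖ := by
    intro uu huu vv hvv
    have hsubu' : Metric.ball x₀ r ⊆ u' := fun x hx => (hrsub hx).1.1.1
    have hsubr₁ : Metric.ball x₀ r ⊆ Metric.ball x₀ r₁ := fun x hx => (hrsub hx).1.1.2
    set gfun : Euc d → Euc d := fun xx => G xx - A xx with hgfun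
    have hdiffg : ∀ x ∈ Metric.ball x₀ r, DifferentiableAt ℝ gfun x := by
      intro x hx
      exact (hdiffu' x (hsubu' hx)).sub (A.differentiable.differentiableAt)
    have hboundg : ∀ x ∈ Metric.ball x₀ r, ‖fderiv ℝ gfun x‖ ≤ ε := by
      intro x hx
      have h1 : fderiv ℝ gfun x = fderiv ℝ G x - A := by
        rw [hgfun]
        rw [fderiv_fun_sub (hdiffu' x (hsubu' hx)) A.differentiable.differentiableAt]
        rw [A.fderiv]
      have h2 := hr₁ (hsubr₁ hx)
      rw [dist_eq_norm] at h2
      rw [h1, hAfd]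
      exact le_of_lt h2
    have hmvt := Convex.norm_image_sub_le_of_norm_fderiv_le hdiffg hboundg
      (convex_ball x₀ r) hvv huu
    have heq : gfun uu - gfun vv = G uu - G vv - A (uu - vv) := by
      rw [hgfun]
      simp only [map_sub]
      abel
    rw [← heq]
    exact hmvt
  -- orbit anchors
  have hy't : Filter.Tendsto (fun k => f.toFun^[k] y') Filter.atTop (𝓝 p) :=
    tendsto_iff_dist_tendsto_zero.mpr hy'
  have hyt : Filter.Tendsto (fun k => f.invFun^[k] y) Filter.atTop (𝓝 p) :=
    tendsto_iff_dist_tendsto_zero.mpr hy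
  have hWmem : φ.source ∩ ↑φ ⁻¹' (Metric.ball x₀ (r/2)) ∈ 𝓝 p := by
    refine Filter.inter_mem (extChartAt_source_mem_nhds p) ?_
    exact (continuousAt_extChartAt (I := 𝓡 d) p).preimage_mem_nhds (Metric.ball_mem_nhds x₀ (by linarith))
  obtain ⟨K₁, hK₁⟩ := Filter.eventually_atTop.mp (hy't.eventually_mem hWmem)
  obtain ⟨K₂, hK₂⟩ := Filter.eventually_atTop.mp (hyt.eventually_mem hWmem)
  set α : ℕ → Euc d := fun i => φ (f.toFun^[i + K₁] y') with hαdef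
  set β : ℕ → Euc d := fun j => φ (f.invFun^[j + K₂] y) with hβdef
  have hαsrc : ∀ i : ℕ, f.toFun^[i + K₁] y' ∈ φ.source ∧ α i ∈ Metric.ball x₀ (r/2) := by
    intro i
    have h := hK₁ (i + K₁) (by omega)
    exact ⟨h.1, h.2⟩
  have hβsrc : ∀ j : ℕ, f.invFun^[j + K₂] y ∈ φ.source ∧ β j ∈ Metric.ball x₀ (r/2) := by
    intro j
    have h := hK₂ (j + K₂) (by omega)
    exact ⟨h.1, h.2⟩
  have hGα : ∀ i : ℕ, G (α i) = α (i+1) := by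
    intro i
    show φ (f.toFun (φ.symm (φ (f.toFun^[i + K₁] y')))) = φ (f.toFun^[(i+1) + K₁] y')
    rw [φ.left_inv (hαsrc i).1]
    congr 1
    have h1 : (i+1) + K₁ = (i + K₁) + 1 := by omega
    rw [h1, Function.iterate_succ_apply']
  have hGβ : ∀ j : ℕ, G (β (j+1)) = β j := by
    intro j
    show φ (f.toFun (φ.symm (φ (f.invFun^[(j+1) + K₂] y)))) = φ (f.invFun^[j + K₂] y)
    rw [φ.left_inv (hβsrc (j+1)).1]
    congr 1
    have h1 : (j+1) + K₂ = (j + K₂) + 1 := by omega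
    rw [h1, Function.iterate_succ_apply']
    exact f.right_inv _
  -- convergence of anchors in the chart
  have hαt : Filter.Tendsto α Filter.atTop (𝓝 x₀) := by
    have h1 : Filter.Tendsto (fun i : ℕ => f.toFun^[i + K₁] y') Filter.atTop (𝓝 p) :=
      hy't.comp (tendsto_add_atTop_nat K₁)
    have h2 := ((continuousAt_extChartAt (I := 𝓡 d) p).tendsto).comp h1
    exact h2
  have hβt : Filter.Tendsto β Filter.atTop (𝓝 x₀) := by
    have h1 : Filter.Tendsto (fun j : ℕ => f.invFun^[j + K₂] y) Filter.atTop (𝓝 p) :=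
      hyt.comp (tendsto_add_atTop_nat K₂)
    exact ((continuousAt_extChartAt (I := 𝓡 d) p).tendsto).comp h1
  -- endpoint continuity
  have hα0target : α 0 ∈ φ.target := φ.map_source (hαsrc 0).1
  have hβ0target : β 0 ∈ φ.target := φ.map_source (hβsrc 0).1
  have hcmapcont : ContinuousAt (fun xx : Euc d => f.invFun^[K₁] (φ.symm xx)) (α 0) := by
    apply ContinuousAt.comp
    · exact (f.contMDiff_invFun.continuous.iterate K₁).continuousAt
    · exact continuousAt_extChartAt_symm'' hα0target
  have hcmapval : f.invFun^[K₁] (φ.symm (α 0)) = y' := by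
    show f.invFun^[K₁] (φ.symm (φ (f.toFun^[0 + K₁] y'))) = y'
    rw [φ.left_inv (hαsrc 0).1]
    have h1 : 0 + K₁ = K₁ := by omega
    rw [h1]
    exact f.left_inv.iterate K₁ y'
  have hdmapcont : ContinuousAt (fun xx : Euc d => f.toFun^[K₂] (φ.symm xx)) (β 0) := by
    apply ContinuousAt.comp
    · exact (f.contMDiff_toFun.continuous.iterate K₂).continuousAt
    · exact continuousAt_extChartAt_symm'' hβ0target
  have hdmapval : f.toFun^[K₂] (φ.symm (β 0)) = y := by
    show f.toFun^[K₂] (φ.symm (φ (f.invFun^[0 + K₂] y))) = y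
    rw [φ.left_inv (hβsrc 0).1]
    have h1 : 0 + K₂ = K₂ := by omega
    rw [h1]
    exact f.right_inv.iterate K₂ y
  have hVy'mem : Vy' ∈ 𝓝 ((fun xx : Euc d => f.invFun^[K₁] (φ.symm xx)) (α 0)) := by
    show Vy' ∈ 𝓝 (f.invFun^[K₁] (φ.symm (α 0)))
    rw [hcmapval]
    exact hVy'
  have hVymem : Vy ∈ 𝓝 ((fun xx : Euc d => f.toFun^[K₂] (φ.symm xx)) (β 0)) := by
    show Vy ∈ 𝓝 (f.toFun^[K₂] (φ.symm (β 0)))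
    rw [hdmapval]
    exact hVy
  obtain ⟨η₁, hη₁pos, hη₁⟩ := Metric.mem_nhds_iff.mp (hcmapcont.preimage_mem_nhds hVy'mem)
  obtain ⟨η₂, hη₂pos, hη₂⟩ := Metric.mem_nhds_iff.mp (hdmapcont.preimage_mem_nhds hVymem)
  -- choice of δ
  set σ : ℝ := min η₁ (min η₂ (r/4)) with hσdef
  have hσpos : 0 < σ := lt_min hη₁pos (lt_min hη₂pos (by linarith))
  have hση₁ : σ ≤ η₁ := min_le_left _ _
  have hση₂ : σ ≤ η₂ := le_trans (min_le_right _ _) (min_le_left _ _)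
  have hσr : σ ≤ r/4 := le_trans (min_le_right _ _) (min_le_right _ _)
  set δ : ℝ := σ / (2*(C₁+1)) with hδdef
  have hδpos : 0 < δ := by rw [hδdef]; positivity
  have hfactor : (2*(C₁+1)) * δ = σ := by
    rw [hδdef]
    field_simp
  have hexpand : σ = 2*(C₁*δ) + 2*δ := by rw [← hfactor]; ring
  have hδσ : 2*(C₁*δ) + δ ≤ σ := by linarith
  have hδstrict : 2*(C₁*δ) < σ := by linarith
  have hρr : 2*(C₁*δ) + δ ≤ r/4 := le_trans hδσ hσr
  -- tail index
  have hevα : ∀ᶠ i in Filter.atTop, ‖α i - x₀‖ ≤ δ/2 := by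
    have h := hαt.eventually_mem (Metric.closedBall_mem_nhds x₀ (by positivity : (0:ℝ) < δ/2))
    filter_upwards [h] with i hi
    rw [Metric.mem_closedBall, dist_eq_norm] at hi
    exact hi
  have hevβ : ∀ᶠ j in Filter.atTop, ‖β j - x₀‖ ≤ δ/2 := by
    have h := hβt.eventually_mem (Metric.closedBall_mem_nhds x₀ (by positivity : (0:ℝ) < δ/2))
    filter_upwards [h] with j hj
    rw [Metric.mem_closedBall, dist_eq_norm] at hj
    exact hj
  obtain ⟨J, hJ⟩ := Filter.eventually_atTop.mp (hevα.and hevβ)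
  -- the final construction
  refine ⟨K₁ + K₂ + 2*J + 2, ?_⟩
  intro n hn
  set m : ℕ := n - (K₁ + K₂) with hmdef
  have hm2 : 2*J + 2 ≤ m := by omega
  have hJm : J + 1 ≤ m := by omega
  set w : ℕ → Euc d := fun i => if i < J + 1 then α i else β (m - i) with hwdef
  have hwmem : ∀ i ≤ m, w i ∈ Metric.closedBall x₀ (r/2) := by
    intro i _
    show (if i < J + 1 then α i else β (m - i)) ∈ Metric.closedBall x₀ (r/2)
    split
    · exact Metric.ball_subset_closedBall (hαsrc i).2
    · exact Metric.ball_subset_closedBall (hβsrc (m - i)).2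
  have herr : ∀ i < m, ‖G (w i) - w (i+1)‖ ≤ δ := by
    intro i him
    by_cases h1 : i + 1 < J + 1
    · have h0 : i < J + 1 := by omega
      show ‖G (if i < J + 1 then α i else β (m - i))
        - (if i + 1 < J + 1 then α (i+1) else β (m - (i+1)))‖ ≤ δ
      rw [if_pos h0, if_pos h1, hGα i, sub_self, norm_zero]
      exact hδpos.le
    · by_cases h2 : i < J + 1
      · show ‖G (if i < J + 1 then α i else β (m - i))
          - (if i + 1 < J + 1 then α (i+1) else β (m - (i+1)))‖ ≤ δ
        rw [if_pos h2, if_neg h1, hGα i]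
        have hiJ : i = J := by omega
        have ha := (hJ (i+1) (by omega)).1
        have hb := (hJ (m - (i+1)) (by omega)).2
        calc ‖α (i+1) - β (m - (i+1))‖
            ≤ ‖α (i+1) - x₀‖ + ‖β (m - (i+1)) - x₀‖ := by
              have heq : α (i+1) - β (m - (i+1))
                  = (α (i+1) - x₀) - (β (m - (i+1)) - x₀) := by abel
              rw [heq]
              exact norm_sub_le _ _
          _ ≤ δ/2 + δ/2 := add_le_add ha hb
          _ = δ := by ring
      · show ‖G (if i < J + 1 then α i else β (m - i))
          - (if i + 1 < J + 1 then α (i+1) else β (m - (i+1)))‖ ≤ δ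
        rw [if_neg h2, if_neg h1]
        have hmi : m - i = (m - (i+1)) + 1 := by omega
        rw [hmi, hGβ (m - (i+1)), sub_self, norm_zero]
        exact hδpos.le
  -- apply the shadowing lemma
  obtain ⟨z, hzrec, hzbd⟩ := discrete_shadow A B Ps Pu C lam hlam0 hlam1 hC0 hAB hPsPu hA hB
    C₁ hC₁def G x₀ r ε δ hδpos.le hε0.le hGlip hsmall hρr m w hwmem herr
  -- the orbit in the manifold
  have hzball : ∀ i ≤ m, z i ∈ Metric.ball x₀ r := by
    intro i hi
    have h1 := hzbd i hi
    have h2 := hwmem i hi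
    rw [Metric.mem_closedBall, dist_eq_norm] at h2
    rw [Metric.mem_ball, dist_eq_norm]
    have h3 : z i - x₀ = (z i - w i) + (w i - x₀) := by abel
    have h4 : ‖z i - x₀‖ ≤ ‖z i - w i‖ + ‖w i - x₀‖ := by
      rw [h3]; exact norm_add_le _ _
    have h5 : 2*(C₁*δ) ≤ r/4 := by linarith
    linarith
  have hstep : ∀ i < m, f.toFun (φ.symm (z i)) = φ.symm (z (i+1)) := by
    intro i hi
    have hzi := hzball i (le_of_lt hi)
    have hmem2 := (hrsub hzi).2
    rw [hzrec i hi]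
    show _ = φ.symm (φ (f.toFun (φ.symm (z i))))
    rw [φ.left_inv hmem2]
  have horbit : ∀ j ≤ m, f.toFun^[j] (φ.symm (z 0)) = φ.symm (z j) := by
    intro j
    induction j with
    | zero => intro _; rfl
    | succ k ih =>
      intro hk
      rw [Function.iterate_succ_apply', ih (by omega), hstep k (by omega)]
  refine ⟨f.invFun^[K₁] (φ.symm (z 0)), ?_, ?_⟩
  · -- the point is in Vy'
    have hw0 : w 0 = α 0 := by
      show (if 0 < J + 1 then α 0 else β (m - 0)) = α 0
      rw [if_pos (by omega)]
    have hz0 : z 0 ∈ Metric.ball (α 0) η₁ := by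
      rw [Metric.mem_ball, dist_eq_norm, ← hw0]
      exact lt_of_le_of_lt (hzbd 0 (by omega)) (lt_of_lt_of_le hδstrict hση₁)
    exact hη₁ hz0
  · -- its n-th iterate is in Vy
    have hnsplit : n = (K₂ + m) + K₁ := by omega
    rw [hnsplit, Function.iterate_add_apply, f.right_inv.iterate K₁ _,
      Function.iterate_add_apply, horbit m le_rfl]
    have hwm : w m = β 0 := by
      show (if m < J + 1 then α m else β (m - m)) = β 0
      rw [if_neg (by omega), Nat.sub_self]
    have hzm : z m ∈ Metric.ball (β 0) η₂ := by
      rw [Metric.mem_ball, dist_eq_norm, ← hwm]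
      exact lt_of_le_of_lt (hzbd m le_rfl) (lt_of_lt_of_le hδstrict hση₂)
    exact hη₂ hzm
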